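/- Let V be a finite-dimensional vector space over a field K with ordered basis e_1, …, e_m, and let d : V → V be a linear map which is triangular (d(e_i) ∈ span{e_j : j > i} for every i) and exact (ker d = range d). Then the fixed-point-free involution τ of {1, …, m} produced by a triangular basis change normalizing d is unique: if τ and τ' are fixed-point-free involutions of {1, …, m} such that for each of them there is a triangular basis change e'_i = e_i + Σ_{j>i} b_{ij} e_j with d(e'_i) = e'_{τ(i)} when τ(i) > i and d(e'_i) = 0 when τ(i) < i, then τ = τ'. -/

import Mathlib

open Submodule Finset

section Aux
variable {K : Type*} [Field K] {V : Type*} [AddCommGroup V] [Module K V] {m : ℕ}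

private def ep (e : Fin m → V) (b : Fin m → Fin m → K) (i : Fin m) : V :=
  e i + ∑ j ∈ Finset.Ioi i, b i j • e j

private lemma ep_repr (e : Module.Basis (Fin m) K V) (b : Fin m → Fin m → K) (i j : Fin m) :
    e.repr (ep e b j) i = if i = j then 1 else if j < i then b j i else 0 := by
  classical
  simp only [ep, map_add, map_sum, map_smul, Module.Basis.repr_self, Finsupp.coe_add,
    Finsupp.coe_finset_sum, Pi.add_apply, Finset.sum_apply, Finsupp.coe_smul, Pi.smul_apply,
    Finsupp.single_apply, smul_eq_mul, mul_ite, mul_one, mul_zero]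
  rw [Finset.sum_ite_eq' (Finset.Ioi j) i (b j)]
  by_cases h : i = j
  · simp [h]
  · simp [h, Ne.symm h, Finset.mem_Ioi]

private lemma ep_li (e : Module.Basis (Fin m) K V) (b : Fin m → Fin m → K) :
    LinearIndependent K (ep e b) := by
  have hdet : e.det (ep e b) = 1 := by
    rw [Module.Basis.det_apply, Matrix.det_of_lowerTriangular]
    · refine Finset.prod_eq_one fun i _ => ?_
      simp [Module.Basis.toMatrix_apply, ep_repr]
    · intro i j hij
      have h1 : i < j := hij
      simp [Module.Basis.toMatrix_apply, ep_repr, h1.ne, not_lt.mpr h1.le, h1.ne']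
  exact ((Module.Basis.is_basis_iff_det e).mpr (by rw [hdet]; exact isUnit_one)).1

end Aux

section Aux2
variable {K : Type*} [Field K] {V : Type*} [AddCommGroup V] [Module K V] {m : ℕ}

private lemma ep_mem (e : Module.Basis (Fin m) K V) (b : Fin m → Fin m → K) {S : Set (Fin m)}
    (hS : ∀ ⦃j l : Fin m⦄, j ∈ S → j ≤ l → l ∈ S) {j : Fin m} (hj : j ∈ S) :
    ep e b j ∈ span K (e '' S) := by
  refine add_mem (subset_span ⟨j, hj, rfl⟩) (sum_mem fun l hl => smul_mem _ _ ?_)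
  exact subset_span ⟨l, hS hj (Finset.mem_Ioi.mp hl).le, rfl⟩

private lemma e_mem (e : Module.Basis (Fin m) K V) (b : Fin m → Fin m → K) {S : Set (Fin m)}
    (hS : ∀ ⦃j l : Fin m⦄, j ∈ S → j ≤ l → l ∈ S) :
    ∀ (n : ℕ) (j : Fin m), m ≤ n + j.val → j ∈ S → e j ∈ span K (ep e b '' S) := by
  intro n
  induction n with
  | zero => intro j h hj; exact absurd j.isLt (by omega)
  | succ n ih =>
    intro j h hj
    have hrw : e j = ep e b j - ∑ l ∈ Finset.Ioi j, b j l • e l := by simp [ep]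
    rw [hrw]
    refine sub_mem (subset_span ⟨j, hj, rfl⟩) (sum_mem fun l hl => smul_mem _ _ ?_)
    have hjl : j < l := Finset.mem_Ioi.mp hl
    exact ih l (by omega) (hS hj hjl.le)

private lemma span_eq' (e : Module.Basis (Fin m) K V) (b : Fin m → Fin m → K) {S : Set (Fin m)}
    (hS : ∀ ⦃j l : Fin m⦄, j ∈ S → j ≤ l → l ∈ S) :
    span K (e '' S) = span K (ep e b '' S) := by
  apply le_antisymm <;> rw [span_le]
  · rintro _ ⟨j, hj, rfl⟩; exact e_mem e b hS m j (by omega) hj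
  · rintro _ ⟨j, hj, rfl⟩; exact ep_mem e b hS hj

private lemma key (e : Module.Basis (Fin m) K V) (d : V →ₗ[K] V) (τ τ' : Fin m → Fin m)
    (hτinv : ∀ i, τ (τ i) = i)
    (hτfp : ∀ i, τ i ≠ i) (hτ'fp : ∀ i, τ' i ≠ i)
    (b b' : Fin m → Fin m → K)
    (h1 : ∀ i, i < τ i → d (ep e b i) = ep e b (τ i))
    (h2 : ∀ i, τ i < i → d (ep e b i) = 0)
    (h1' : ∀ i, i < τ' i → d (ep e b' i) = ep e b' (τ' i))
    (h2' : ∀ i, τ' i < i → d (ep e b' i) = 0)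
    (i : Fin m) (hi : i < τ i) : i < τ' i ∧ τ' i ≤ τ i := by
  classical
  set Mt : Submodule K V := Submodule.map d (span K (e '' {j | i < j})) with hMt
  have hSle : ∀ (c : Fin m), ∀ ⦃j l : Fin m⦄, j ∈ {j | c ≤ j} → j ≤ l → l ∈ {j | c ≤ j} :=
    fun c j l hj hjl => le_trans hj hjl
  have hSlt : ∀ (c : Fin m), ∀ ⦃j l : Fin m⦄, j ∈ {j | c < j} → j ≤ l → l ∈ {j | c < j} :=
    fun c j l hj hjl => lt_of_lt_of_le hj hjl
  -- membership of the distinguished vector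
  have hA : ep e b (τ i) ∈ Submodule.map d (span K (e '' {j | i ≤ j})) :=
    ⟨ep e b i, ep_mem e b (hSle i) (le_refl i), h1 i hi⟩
  -- general bound
  have hgen : ∀ c : Fin m → Fin m → K,
      Submodule.map d (span K (e '' {j | i ≤ j})) ≤ Mt ⊔ (K ∙ d (ep e c i)) := by
    intro c
    rw [span_eq' e c (hSle i), Submodule.map_span, span_le]
    rintro _ ⟨_, ⟨j, hj, rfl⟩, rfl⟩
    rcases eq_or_lt_of_le (show i ≤ j from hj) with rfl | hij
    · exact Submodule.mem_sup_right (mem_span_singleton_self _)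
    · exact Submodule.mem_sup_left ⟨ep e c j, ep_mem e c (hSlt i) hij, rfl⟩
  -- non-membership
  have hC : ep e b (τ i) ∉ Mt ⊔ span K (e '' {j | τ i < j}) := by
    intro hmem
    have hsub : Mt ⊔ span K (e '' {j | τ i < j}) ≤ span K (ep e b '' {k | k ≠ τ i}) := by
      refine sup_le ?_ ?_
      · rw [hMt, span_eq' e b (hSlt i), Submodule.map_span, span_le]
        rintro _ ⟨_, ⟨j, hj, rfl⟩, rfl⟩
        have hji : j ≠ i := ne_of_gt (hj : i < j)
        rcases lt_or_ge j (τ j) with hlt | hle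
        · rw [h1 j hlt]
          refine subset_span ⟨τ j, ?_, rfl⟩
          intro hEq
          exact hji (by rw [← hτinv j, hEq, hτinv i])
        · rcases eq_or_lt_of_le hle with hEq | hlt'
          · exact absurd hEq (hτfp j)
          · rw [h2 j hlt']; exact zero_mem _
      · rw [span_eq' e b (hSlt (τ i)), span_le]
        rintro _ ⟨j, hj, rfl⟩
        exact subset_span ⟨j, ne_of_gt (hj : τ i < j), rfl⟩
    exact (ep_li e b).notMem_span_image (by simp) (hsub hmem)
  constructor
  · -- i < τ' i
    rcases lt_trichotomy i (τ' i) with h | h | h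
    · exact h
    · exact absurd h.symm (hτ'fp i)
    · exfalso
      have h0 : d (ep e b' i) = 0 := h2' i h
      have := hgen b' hA
      rw [h0] at this
      simp only [Submodule.span_zero_singleton, sup_bot_eq] at this
      exact hC (Submodule.mem_sup_left this)
  · -- τ' i ≤ τ i
    by_contra hlt
    push_neg at hlt
    have hb : Submodule.map d (span K (e '' {j | i ≤ j})) ≤ Mt ⊔ span K (e '' {j | τ i < j}) := by
      refine le_trans (hgen b') (sup_le le_sup_left ?_)
      refine le_trans ?_ le_sup_right
      rcases lt_trichotomy i (τ' i) with h | h | h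
      · rw [h1' i h, span_singleton_le_iff_mem]
        exact ep_mem e b' (hSlt (τ i)) (show τ i < τ' i from hlt)
      · exact absurd h.symm (hτ'fp i)
      · rw [h2' i h]
        simp [Submodule.span_zero_singleton]
    exact hC (hb hA)
end Aux2

/-- Proposition 2.5 (uniqueness part): the fixed-point-free involution produced by
a triangular basis change normalizing a triangular exact differential is unique. -/
theorem stmt_1 {K : Type*} [Field K] {V : Type*} [AddCommGroup V] [Module K V]
    {m : ℕ} (e : Module.Basis (Fin m) K V) (d : V →ₗ[K] V)
    (htri : ∀ i, d (e i) ∈ Submodule.span K (e '' {j | i < j}))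
    (hexact : LinearMap.ker d = LinearMap.range d)
    (τ τ' : Fin m → Fin m)
    (hτinv : ∀ i, τ (τ i) = i) (hτfp : ∀ i, τ i ≠ i)
    (hτ'inv : ∀ i, τ' (τ' i) = i) (hτ'fp : ∀ i, τ' i ≠ i)
    (hτ : ∃ b : Fin m → Fin m → K,
      (∀ i, i < τ i →
        d (e i + ∑ j ∈ Finset.Ioi i, b i j • e j)
          = e (τ i) + ∑ j ∈ Finset.Ioi (τ i), b (τ i) j • e j) ∧
      (∀ i, τ i < i →
        d (e i + ∑ j ∈ Finset.Ioi i, b i j • e j) = 0))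
    (hτ' : ∃ b' : Fin m → Fin m → K,
      (∀ i, i < τ' i →
        d (e i + ∑ j ∈ Finset.Ioi i, b' i j • e j)
          = e (τ' i) + ∑ j ∈ Finset.Ioi (τ' i), b' (τ' i) j • e j) ∧
      (∀ i, τ' i < i →
        d (e i + ∑ j ∈ Finset.Ioi i, b' i j • e j) = 0)) :
    τ = τ' := by
  obtain ⟨b, hb1, hb2⟩ := hτ
  obtain ⟨b', hb'1, hb'2⟩ := hτ'
  have hmain : ∀ i, i < τ i → τ i = τ' i := by
    intro i h
    obtain ⟨hlt, hle⟩ := key e d τ τ' hτinv hτfp hτ'fp b b' hb1 hb2 hb'1 hb'2 i h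
    obtain ⟨_, hle'⟩ := key e d τ' τ hτ'inv hτ'fp hτfp b' b hb'1 hb'2 hb1 hb2 i hlt
    exact le_antisymm hle' hle
  funext i
  rcases lt_trichotomy i (τ i) with h | h | h
  · exact hmain i h
  · exact absurd h.symm (hτfp i)
  · have hjlt : τ i < τ (τ i) := by rw [hτinv i]; exact h
    have h1 : τ (τ i) = τ' (τ i) := hmain (τ i) hjlt
    rw [hτinv i] at h1
    calc τ i = τ' (τ' (τ i)) := (hτ'inv (τ i)).symm
    _ = τ' i := by rw [← h1]
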